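/- arXiv:0801.3741 — 4 statements merged into one kernel-verified Lean document; each statement's English description precedes it below -/
import Mathlib

section
/- Let g be a finite-dimensional nilpotent real Lie algebra, let g' ⊆ g be a Lie subalgebra with dim g' + 2 ≤ dim g, and let X ∈ g with X ∉ g'. Assume that the Lie subalgebra of g generated by g' ∪ {X} is all of g. Then there exists Y ∈ g' such that e^{ad Y}(X) does not belong to the linear subspace g' + ℝ·X. -/
open Finset

private lemma aux_vanish {M : Type*} [AddCommGroup M] [Module ℝ M] {n : ℕ} {v : ℕ → M}
    (h : ∀ t : ℝ, ∑ k ∈ Finset.range n, t ^ k • v k = 0) {k : ℕ} (hk : k < n) : v k = 0 := by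
  rw [← Module.forall_dual_apply_eq_zero_iff ℝ]
  intro φ
  have hp : ∀ t : ℝ,
      Polynomial.eval t (∑ j ∈ Finset.range n, Polynomial.C (φ (v j)) * Polynomial.X ^ j) = 0 := by
    intro t
    have h1 := congrArg φ (h t)
    simp only [map_sum, map_smul, smul_eq_mul, map_zero] at h1
    simp only [Polynomial.eval_finset_sum, Polynomial.eval_mul, Polynomial.eval_C,
      Polynomial.eval_pow, Polynomial.eval_X]
    rw [← h1]
    exact Finset.sum_congr rfl fun j _ => mul_comm _ _
  have hp0 : (∑ j ∈ Finset.range n, Polynomial.C (φ (v j)) * Polynomial.X ^ j) = 0 :=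
    Polynomial.funext (fun t => by rw [hp t, Polynomial.eval_zero])
  have h2 := congrArg (fun p => Polynomial.coeff p k) hp0
  simp only [Polynomial.finset_sum_coeff, Polynomial.coeff_C_mul, Polynomial.coeff_X_pow,
    Polynomial.coeff_zero, mul_ite, mul_one, mul_zero] at h2
  rwa [Finset.sum_ite_eq (Finset.range n) k, if_pos (Finset.mem_range.mpr hk)] at h2


/-- The exponential of the (nilpotent) adjoint operator `ad Y` of a nilpotent Lie algebra,
expressed as the finite sum `∑_{k ≤ dim} (ad Y)^k / k!` (higher terms vanish since `ad Y` is a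
nilpotent endomorphism of a space of dimension `dim`). -/
noncomputable def expAd {L : Type*} [LieRing L] [LieAlgebra ℝ L] (Y : L) :
    L →ₗ[ℝ] L :=
  ∑ k ∈ Finset.range (Module.finrank ℝ L + 1),
    ((k.factorial : ℝ)⁻¹ • ((LieAlgebra.ad ℝ L Y) ^ k) : Module.End ℝ L)

/-- If `g` is a finite-dimensional nilpotent real Lie algebra, `g'` a Lie
subalgebra with `dim g' + 2 ≤ dim g`, and `X ∉ g'` is such that `g' ∪ {X}` generates `g` as a
Lie algebra, then there is `Y ∈ g'` with `e^{ad Y}(X) ∉ g' + ℝ·X`. -/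
theorem exists_expAd_not_mem_span
    {L : Type*} [LieRing L] [LieAlgebra ℝ L] [Module.Finite ℝ L]
    [LieRing.IsNilpotent L]
    (g' : LieSubalgebra ℝ L)
    (hdim : Module.finrank ℝ g' + 2 ≤ Module.finrank ℝ L)
    (X : L) (hX : X ∉ g')
    (hgen : LieSubalgebra.lieSpan ℝ L ((g' : Set L) ∪ {X}) = ⊤) :
    ∃ Y ∈ g', expAd Y X ∉ g'.toSubmodule ⊔ Submodule.span ℝ {X} := by
  by_contra hcon
  push_neg at hcon
  set W : Submodule ℝ L := g'.toSubmodule ⊔ Submodule.span ℝ {X} with hWdef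
  -- Step 1: all brackets ⁅Y, X⁆ with Y ∈ g' lie in W
  have hbr : ∀ Y ∈ g', ⁅Y, X⁆ ∈ W := by
    intro Y hY
    set n := Module.finrank ℝ L with hn
    have h1 : ∀ t : ℝ, ∑ k ∈ Finset.range (n + 1),
        t ^ k • ((k.factorial : ℝ)⁻¹ • ((LieAlgebra.ad ℝ L Y) ^ k) X) ∈ W := by
      intro t
      have hmem := hcon (t • Y) (g'.smul_mem t hY)
      have he : expAd (t • Y) X = ∑ k ∈ Finset.range (n + 1),
          t ^ k • ((k.factorial : ℝ)⁻¹ • ((LieAlgebra.ad ℝ L Y) ^ k) X) := by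
        rw [expAd, LinearMap.sum_apply]
        refine Finset.sum_congr rfl fun k _ => ?_
        rw [LinearMap.smul_apply, map_smul, smul_pow, LinearMap.smul_apply, smul_comm]
      rwa [he] at hmem
    have h2 : ∀ t : ℝ, ∑ k ∈ Finset.range (n + 1),
        t ^ k • (W.mkQ ((k.factorial : ℝ)⁻¹ • ((LieAlgebra.ad ℝ L Y) ^ k) X)) = 0 := by
      intro t
      rw [← Finset.sum_congr rfl fun k _ => (map_smul W.mkQ (t ^ k) _), ← map_sum]
      rw [Submodule.mkQ_apply, Submodule.Quotient.mk_eq_zero]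
      exact h1 t
    have h3 := aux_vanish h2 (k := 1) (by omega)
    rw [Submodule.mkQ_apply, Submodule.Quotient.mk_eq_zero] at h3
    simpa using h3
  -- Step 2: W is closed under brackets
  have hWbr : ∀ u ∈ W, ∀ v ∈ W, ⁅u, v⁆ ∈ W := by
    intro u hu v hv
    obtain ⟨a, ha, x, hx, rfl⟩ := Submodule.mem_sup.mp hu
    obtain ⟨b, hb, y, hy, rfl⟩ := Submodule.mem_sup.mp hv
    obtain ⟨s, rfl⟩ := Submodule.mem_span_singleton.mp hx
    obtain ⟨t, rfl⟩ := Submodule.mem_span_singleton.mp hy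
    have hexp : ⁅a + s • X, b + t • X⁆ = ⁅a, b⁆ + t • ⁅a, X⁆ - s • ⁅b, X⁆ := by
      rw [add_lie, lie_add, lie_add, smul_lie, smul_lie, lie_smul, lie_smul, lie_self,
        ← lie_skew b X]
      module
    rw [hexp]
    exact W.sub_mem (W.add_mem (le_sup_left (α := Submodule ℝ L) (g'.lie_mem ha hb))
      (W.smul_mem t (hbr a ha))) (W.smul_mem s (hbr b hb))
  -- Step 3: W is a Lie subalgebra containing the generators, hence all of L
  let W' : LieSubalgebra ℝ L :=
    { toSubmodule := W, lie_mem' := fun {u v} hu hv => hWbr u hu v hv }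
  have hle : LieSubalgebra.lieSpan ℝ L ((g' : Set L) ∪ {X}) ≤ W' := by
    rw [LieSubalgebra.lieSpan_le]
    rintro z (hz | hz)
    · exact le_sup_left (α := Submodule ℝ L) hz
    · rw [Set.mem_singleton_iff] at hz
      rw [hz]
      exact le_sup_right (α := Submodule ℝ L) (Submodule.mem_span_singleton_self X)
  rw [hgen] at hle
  have hWtop : W = ⊤ := Submodule.eq_top_iff'.mpr fun z => hle trivial
  -- dimension count
  have hX0 : X ≠ 0 := fun h => hX (h ▸ g'.zero_mem)
  have h1 : Module.finrank ℝ (Submodule.span ℝ {X}) = 1 := finrank_span_singleton hX0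
  have h2 : Module.finrank ℝ W ≤ Module.finrank ℝ g' + 1 := by
    calc Module.finrank ℝ W ≤ Module.finrank ℝ g'.toSubmodule
        + Module.finrank ℝ (Submodule.span ℝ {X}) :=
      Submodule.finrank_add_le_finrank_add_finrank _ _
    _ = Module.finrank ℝ g' + 1 := by rw [h1]; rfl
  rw [hWtop, finrank_top] at h2
  omega
end

section
/- Let g be a finite-dimensional nilpotent real Lie algebra, let g' ⊆ g be a Lie subalgebra and X ∈ g. Define subspaces W₀ := ℝ·X and W_{k+1} := span{ [Y, w] : Y ∈ g', w ∈ W_k }. Then the linear span of { e^{ad Y}(X) : Y ∈ g' } equals the (finite) sum ∑_{k≥0} W_k; equivalently, it is the smallest linear subspace of g containing X that is invariant under ad Y for every Y ∈ g'. -/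
open Finset

section AuxLemmas

lemma sum_pow_expand {R : Type*} [Semiring R] {ι : Type*} [Fintype ι] [DecidableEq ι]
    (B : ι → R) : ∀ k : ℕ,
    (∑ i, B i) ^ k = ∑ f : Fin k → ι, (List.ofFn fun j => B (f j)).prod
  | 0 => by simp
  | (k + 1) => by
    have h2 : ∀ p : ι × (Fin k → ι),
        B p.1 * (List.ofFn fun j => B (p.2 j)).prod
          = (List.ofFn fun j => B ((Fin.consEquiv fun _ => ι) p j)).prod := by
      intro p
      simp [List.ofFn_succ, Fin.consEquiv, Function.comp]
    calc (∑ i, B i) ^ (k + 1)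
        = (∑ i, B i) * ∑ f : Fin k → ι, (List.ofFn fun j => B (f j)).prod := by
          rw [pow_succ', sum_pow_expand B k]
      _ = ∑ p : ι × (Fin k → ι), B p.1 * (List.ofFn fun j => B (p.2 j)).prod := by
          rw [Finset.sum_mul_sum, Fintype.sum_prod_type]
      _ = ∑ f : Fin (k + 1) → ι, (List.ofFn fun j => B (f j)).prod :=
          Fintype.sum_equiv (Fin.consEquiv fun _ => ι) _ _ h2

lemma count_lemma {n : ℕ} (f : Fin n → Fin n) :
    (∑ S : Finset (Fin n), if (∀ j, f j ∈ S) then ((-1 : ℤ) ^ (n - S.card)) else 0)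
      = if Function.Bijective f then 1 else 0 := by
  classical
  have h1 : ∀ S : Finset (Fin n), (∀ j, f j ∈ S) ↔ Finset.image f Finset.univ ⊆ S := by
    intro S; simp [Finset.image_subset_iff]
  rw [Finset.sum_congr rfl fun S _ => by rw [if_congr (h1 S) rfl rfl]]
  rw [← Finset.sum_filter]
  have h2 : (∑ S ∈ Finset.univ.filter fun S => Finset.image f Finset.univ ⊆ S,
      ((-1 : ℤ) ^ (n - S.card)))
      = ∑ C ∈ (Finset.image f Finset.univ)ᶜ.powerset, (-1 : ℤ) ^ C.card := by
    refine Finset.sum_nbij' (fun S => Sᶜ) (fun C => Cᶜ) ?_ ?_ ?_ ?_ ?_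
    · intro S hS
      simp only [Finset.mem_filter, Finset.mem_univ, true_and] at hS
      simpa [Finset.mem_powerset] using Finset.compl_subset_compl.mpr hS
    · intro C hC
      simp only [Finset.mem_powerset] at hC
      simp only [Finset.mem_filter, Finset.mem_univ, true_and]
      simpa using Finset.compl_subset_compl.mpr hC
    · intro S _; simp
    · intro C _; simp
    · intro S _
      rw [Finset.card_compl]
      simp
  rw [h2, Finset.sum_powerset_neg_one_pow_card]
  by_cases h : Function.Bijective f
  · rw [if_pos h, if_pos ((Finset.compl_eq_empty_iff _).mpr
      (Finset.eq_univ_of_forall fun y => by simpa using h.surjective y))]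
  · rw [if_neg h, if_neg]
    intro heq
    have huniv := (Finset.compl_eq_empty_iff _).mp heq
    refine h (Function.Surjective.bijective_of_finite fun y => ?_)
    have : y ∈ Finset.image f Finset.univ := by rw [huniv]; exact Finset.mem_univ y
    simpa using this

lemma polar_identity {R : Type*} [Ring R] (n : ℕ) (A : Fin n → R) :
    ∑ σ : Equiv.Perm (Fin n), (List.ofFn fun j => A (σ j)).prod
      = ∑ S : Finset (Fin n), (-1 : ℤ) ^ (n - S.card) • (∑ i ∈ S, A i) ^ n := by
  classical
  have h1 : ∀ S : Finset (Fin n), (∑ i ∈ S, A i) ^ n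
      = ∑ f : Fin n → Fin n,
          if (∀ j, f j ∈ S) then (List.ofFn fun j => A (f j)).prod else 0 := by
    intro S
    have hS : (∑ i ∈ S, A i) = ∑ i : Fin n, if i ∈ S then A i else 0 := by
      rw [Finset.sum_ite_mem, Finset.univ_inter]
    rw [hS, sum_pow_expand]
    refine Finset.sum_congr rfl fun f _ => ?_
    by_cases hf : ∀ j, f j ∈ S
    · rw [if_pos hf]
      congr 1
      exact congrArg List.ofFn (funext fun j => if_pos (hf j))
    · rw [if_neg hf]
      push_neg at hf
      obtain ⟨j, hj⟩ := hf
      apply List.prod_eq_zero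
      rw [List.mem_ofFn]
      exact ⟨j, by simp [hj]⟩
  calc ∑ σ : Equiv.Perm (Fin n), (List.ofFn fun j => A (σ j)).prod
      = ∑ f ∈ Finset.univ.filter Function.Bijective,
          (List.ofFn fun j => A (f j)).prod := by
        refine Finset.sum_nbij' (fun σ => (σ : Fin n → Fin n))
          (fun f => if hf : Function.Bijective f then Equiv.ofBijective f hf
            else Equiv.refl (Fin n)) ?_ ?_ ?_ ?_ ?_
        · intro σ _; simp only [Finset.mem_filter, Finset.mem_univ, true_and]; exact σ.bijective
        · intro f _; simp
        · intro σ _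
          rw [dif_pos σ.bijective]
          ext x
          simp [Equiv.ofBijective]
        · intro f hf
          simp only [Finset.mem_filter, Finset.mem_univ, true_and] at hf
          rw [dif_pos hf]
          rfl
        · intro σ _; rfl
    _ = ∑ f : Fin n → Fin n, (if Function.Bijective f then (1 : ℤ) else 0)
          • (List.ofFn fun j => A (f j)).prod := by
        rw [Finset.sum_filter]
        refine Finset.sum_congr rfl fun f _ => ?_
        by_cases hf : Function.Bijective f <;> simp [hf]
    _ = ∑ f : Fin n → Fin n,
          (∑ S : Finset (Fin n), if (∀ j, f j ∈ S) then ((-1 : ℤ) ^ (n - S.card)) else 0)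
          • (List.ofFn fun j => A (f j)).prod := by
        refine Finset.sum_congr rfl fun f _ => ?_
        rw [count_lemma]
    _ = ∑ S : Finset (Fin n), (-1 : ℤ) ^ (n - S.card) • (∑ i ∈ S, A i) ^ n := by
        simp_rw [Finset.sum_smul, ite_smul, zero_smul]
        rw [Finset.sum_comm]
        refine Finset.sum_congr rfl fun S _ => ?_
        rw [h1 S, Finset.smul_sum]
        refine Finset.sum_congr rfl fun f _ => ?_
        rw [smul_ite, smul_zero]

lemma coeff_zero_of_forall_eval_zero {M : Type*} [AddCommGroup M] [Module ℝ M] (N : ℕ)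
    (c : ℕ → M) (h : ∀ t : ℝ, ∑ k ∈ Finset.range N, t ^ k • c k = 0) :
    ∀ k < N, c k = 0 := by
  intro k hk
  rw [← Module.forall_dual_apply_eq_zero_iff ℝ]
  intro φ
  have hp : (∑ j ∈ Finset.range N, Polynomial.C (φ (c j)) * Polynomial.X ^ j : Polynomial ℝ)
      = 0 := by
    refine Polynomial.funext fun t => ?_
    rw [Polynomial.eval_finset_sum, Polynomial.eval_zero]
    have h2 := congrArg φ (h t)
    rw [map_sum, map_zero] at h2
    rw [← h2]
    refine Finset.sum_congr rfl fun j _ => ?_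
    rw [Polynomial.eval_mul, Polynomial.eval_C, Polynomial.eval_pow, Polynomial.eval_X,
      map_smul, smul_eq_mul, mul_comm]
  have := congrArg (fun p => Polynomial.coeff p k) hp
  simpa [Polynomial.finset_sum_coeff, Polynomial.coeff_C_mul_X_pow,
    Finset.sum_ite_eq' (Finset.range N), hk] using this

lemma coeff_mem_of_forall_sum_mem {M : Type*} [AddCommGroup M] [Module ℝ M]
    (T : Submodule ℝ M) (N : ℕ) (c : ℕ → M)
    (h : ∀ t : ℝ, (∑ k ∈ Finset.range N, t ^ k • c k) ∈ T) : ∀ k < N, c k ∈ T := by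
  intro k hk
  have h0 := coeff_zero_of_forall_eval_zero N (fun j => T.mkQ (c j)) (fun t => by
    have h1 : T.mkQ (∑ k ∈ Finset.range N, t ^ k • c k) = 0 := by
      rw [Submodule.mkQ_apply, Submodule.Quotient.mk_eq_zero]
      exact h t
    rw [map_sum] at h1
    simpa [map_smul] using h1) k hk
  have : T.mkQ (c k) = 0 := h0
  rwa [Submodule.mkQ_apply, Submodule.Quotient.mk_eq_zero] at this

end AuxLemmas

namespace SpanExpAdAux

variable {L : Type*} [LieRing L] [LieAlgebra ℝ L]

/-- The product of the adjoint operators of the entries of a list. -/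
noncomputable def F (l : List L) : Module.End ℝ L :=
  (l.map fun y => LieAlgebra.ad ℝ L y).prod

lemma F_cons (y : L) (l : List L) : F (y :: l) = LieAlgebra.ad ℝ L y * F l := by
  simp [F]

/-- Monomials of length `n`: iterated brackets of elements of `g'` applied to `X`. -/
def Mon (g' : LieSubalgebra ℝ L) (X : L) (n : ℕ) : Set L :=
  {z | ∃ l : List L, l.length = n ∧ (∀ y ∈ l, y ∈ g') ∧ z = F l X}

/-- The span of all monomials of length `< n`. -/
def UMon (g' : LieSubalgebra ℝ L) (X : L) (n : ℕ) : Submodule ℝ L :=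
  Submodule.span ℝ {z | ∃ j < n, z ∈ Mon g' X j}

lemma ad_map_UMon (g' : LieSubalgebra ℝ L) (X : L) {x : L} (hx : x ∈ g') (n : ℕ) :
    (UMon g' X n).map (LieAlgebra.ad ℝ L x) ≤ UMon g' X (n + 1) := by
  rw [UMon, Submodule.map_span]
  refine Submodule.span_le.mpr ?_
  rintro _ ⟨z, ⟨j, hj, l, hl, hlg, rfl⟩, rfl⟩
  refine Submodule.subset_span ⟨j + 1, by omega, x :: l, by simp [hl], ?_, ?_⟩
  · intro y hy
    rcases List.mem_cons.mp hy with rfl | hy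
    · exact hx
    · exact hlg y hy
  · simp [F_cons]

/-- Monomials indexed by permuted lists differ by a combination of shorter monomials. -/
lemma perm_diff (g' : LieSubalgebra ℝ L) (X : L) {l₁ l₂ : List L} (h : l₁.Perm l₂) :
    (∀ y ∈ l₁, y ∈ g') → F l₁ X - F l₂ X ∈ UMon g' X l₁.length := by
  induction h with
  | nil => intro _; simp [UMon]
  | @cons x t₁ t₂ h ih =>
    intro hmem
    have hx : x ∈ g' := hmem x (List.mem_cons_self (a := x) (l := t₁))
    have hd := ih fun y hy => hmem y (List.mem_cons_of_mem _ hy)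
    have heq : F (x :: t₁) X - F (x :: t₂) X
        = LieAlgebra.ad ℝ L x (F t₁ X - F t₂ X) := by
      simp [F_cons, Module.End.mul_apply, map_sub]
    rw [heq]
    have hlen : (List.length (x :: t₁)) = t₁.length + 1 := rfl
    rw [hlen]
    exact ad_map_UMon g' X hx t₁.length ⟨_, hd, rfl⟩
  | swap x y t =>
    intro hmem
    have hx : x ∈ g' := hmem x (by simp)
    have hy : y ∈ g' := hmem y (by simp)
    have hab : LieAlgebra.ad ℝ L ⁅y, x⁆
        = LieAlgebra.ad ℝ L y * LieAlgebra.ad ℝ L x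
          - LieAlgebra.ad ℝ L x * LieAlgebra.ad ℝ L y := by
      ext z; simp [Module.End.mul_apply]
    have heq : F (y :: x :: t) X - F (x :: y :: t) X = F (⁅y, x⁆ :: t) X := by
      simp [F_cons, Module.End.mul_apply, hab, LinearMap.sub_apply]
    rw [heq]
    refine Submodule.subset_span ⟨t.length + 1, by simp, ⁅y, x⁆ :: t, by simp, ?_, rfl⟩
    intro z hz
    rcases List.mem_cons.mp hz with rfl | hz
    · exact g'.lie_mem hy hx
    · exact hmem z (by simp [hz])
  | @trans a b c h₁ h₂ ih₁ ih₂ =>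
    intro hmem
    have hmem₂ : ∀ y ∈ b, y ∈ g' := fun y hy => hmem y (h₁.mem_iff.mpr hy)
    have hd₁ := ih₁ hmem
    have hd₂ := ih₂ hmem₂
    rw [← h₁.length_eq] at hd₂
    have key : F a X - F c X = (F a X - F b X) + (F b X - F c X) := by abel
    rw [key]
    exact Submodule.add_mem _ hd₁ hd₂

variable [Module.Finite ℝ L] [LieRing.IsNilpotent L]

lemma ad_pow_finrank (Y : L) :
    (LieAlgebra.ad ℝ L Y) ^ (Module.finrank ℝ L) = 0 := by
  have h0 : IsNilpotent (LieAlgebra.ad ℝ L Y) :=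
    LieModule.isNilpotent_toEnd_of_isNilpotent ℝ L L Y
  have hch := h0.charpoly_eq_X_pow_finrank
  have h1 : Polynomial.aeval (LieAlgebra.ad ℝ L Y) ((LieAlgebra.ad ℝ L Y).charpoly) = 0 :=
    (LieAlgebra.ad ℝ L Y).aeval_self_charpoly
  rw [hch, map_pow, Polynomial.aeval_X] at h1
  exact h1

lemma expAd_smul_apply (X : L) (t : ℝ) (Y : L) :
    expAd (t • Y) X = ∑ k ∈ Finset.range (Module.finrank ℝ L + 1),
      t ^ k • ((k.factorial : ℝ)⁻¹ • ((LieAlgebra.ad ℝ L Y) ^ k) X) := by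
  rw [expAd]
  rw [LinearMap.coe_sum, Finset.sum_apply]
  refine Finset.sum_congr rfl fun k _ => ?_
  rw [map_smul, smul_pow, LinearMap.smul_apply, LinearMap.smul_apply]
  rw [smul_comm]

lemma ad_pow_mem (g' : LieSubalgebra ℝ L) (X : L) (Y : L) (hY : Y ∈ g') (k : ℕ) :
    ((LieAlgebra.ad ℝ L Y) ^ k) X ∈
      Submodule.span ℝ {z : L | ∃ Y ∈ g', z = expAd Y X} := by
  set T := Submodule.span ℝ {z : L | ∃ Y ∈ g', z = expAd Y X} with hT
  set n := Module.finrank ℝ L with hn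
  by_cases hk : k ≤ n
  · have h1 := coeff_mem_of_forall_sum_mem T (n + 1)
      (fun j => ((j.factorial : ℝ)⁻¹ • ((LieAlgebra.ad ℝ L Y) ^ j) X)) (fun t => by
        rw [← expAd_smul_apply X t Y]
        exact Submodule.subset_span ⟨t • Y, g'.smul_mem t hY, rfl⟩) k (by omega)
    have h2 := T.smul_mem (k.factorial : ℝ) h1
    rwa [smul_smul, mul_inv_cancel₀ (Nat.cast_ne_zero.mpr (Nat.factorial_ne_zero k)),
      one_smul] at h2
  · have hz : (LieAlgebra.ad ℝ L Y) ^ k = 0 := by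
      rw [← Nat.sub_add_cancel (by omega : n ≤ k), pow_add, ad_pow_finrank, mul_zero]
    rw [hz]
    simpa using T.zero_mem

lemma sym_sum_mem (g' : LieSubalgebra ℝ L) (X : L) (m : ℕ) (v : Fin m → L)
    (hv : ∀ i, v i ∈ g') :
    (∑ σ : Equiv.Perm (Fin m), ((List.ofFn fun j => LieAlgebra.ad ℝ L (v (σ j))).prod) X)
      ∈ Submodule.span ℝ {z : L | ∃ Y ∈ g', z = expAd Y X} := by
  classical
  have hA := polar_identity m (fun i => LieAlgebra.ad ℝ L (v i))
  have happ := congrArg (fun (f : Module.End ℝ L) => f X) hA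
  simp only [LinearMap.coe_sum, Finset.sum_apply, LinearMap.smul_apply] at happ
  rw [happ]
  refine Submodule.sum_mem _ fun S _ => ?_
  have hsum : (∑ i ∈ S, LieAlgebra.ad ℝ L (v i)) = LieAlgebra.ad ℝ L (∑ i ∈ S, v i) := by
    rw [map_sum]
  rw [hsum]
  refine zsmul_mem ?_ _
  exact ad_pow_mem g' X _ (Submodule.sum_mem _ fun i _ => hv i) m

lemma mon_span_le (g' : LieSubalgebra ℝ L) (X : L) (n : ℕ) :
    Submodule.span ℝ (Mon g' X n) ≤
      Submodule.span ℝ {z : L | ∃ Y ∈ g', z = expAd Y X} := by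
  classical
  set T := Submodule.span ℝ {z : L | ∃ Y ∈ g', z = expAd Y X} with hT
  induction n using Nat.strong_induction_on with
  | _ n IH =>
  refine Submodule.span_le.mpr ?_
  rintro z ⟨l, hlen, hlg, rfl⟩
  subst hlen
  have hUT : UMon g' X l.length ≤ T := by
    refine Submodule.span_le.mpr ?_
    rintro w ⟨j, hj, hw⟩
    exact IH j hj (Submodule.subset_span hw)
  set v : Fin l.length → L := l.get with hv
  have hofFn : List.ofFn v = l := List.ofFn_get l
  have hvg : ∀ i, v i ∈ g' := fun i => hlg _ (List.get_mem l i)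
  have hsymT := sym_sum_mem g' X l.length v hvg
  have hterm : ∀ σ : Equiv.Perm (Fin l.length),
      ((List.ofFn fun j => LieAlgebra.ad ℝ L (v (σ j))).prod) X - F l X
        ∈ UMon g' X l.length := by
    intro σ
    have hp : (List.ofFn (v ∘ σ)).Perm l :=
      (σ.ofFn_comp_perm v).trans (by rw [hofFn])
    have hm : ∀ y ∈ List.ofFn (v ∘ σ), y ∈ g' := by
      intro y hy
      rw [List.mem_ofFn] at hy
      obtain ⟨i, rfl⟩ := hy
      exact hvg _
    have hd := perm_diff g' X hp hm
    rw [List.length_ofFn] at hd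
    have hF : F (List.ofFn (v ∘ σ)) = (List.ofFn fun j => LieAlgebra.ad ℝ L (v (σ j))).prod := by
      rw [F, List.map_ofFn]
      rfl
    rwa [hF] at hd
  have hsum : (l.length.factorial : ℝ) • (F l X)
      = (∑ σ : Equiv.Perm (Fin l.length),
          ((List.ofFn fun j => LieAlgebra.ad ℝ L (v (σ j))).prod) X)
        - ∑ σ : Equiv.Perm (Fin l.length),
            (((List.ofFn fun j => LieAlgebra.ad ℝ L (v (σ j))).prod) X - F l X) := by
    rw [Finset.sum_sub_distrib, sub_sub_cancel, Finset.sum_const, Finset.card_univ,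
      Fintype.card_perm, Fintype.card_fin, Nat.cast_smul_eq_nsmul]
  have hmem : (l.length.factorial : ℝ) • (F l X) ∈ T := by
    rw [hsum]
    exact Submodule.sub_mem _ hsymT (Submodule.sum_mem _ fun σ _ => hUT (hterm σ))
  have h2 := T.smul_mem (l.length.factorial : ℝ)⁻¹ hmem
  rwa [smul_smul, inv_mul_cancel₀ (Nat.cast_ne_zero.mpr (Nat.factorial_ne_zero _)),
    one_smul] at h2

end SpanExpAdAux

open SpanExpAdAux in
/-- For a finite-dimensional nilpotent real Lie algebra `g`, a Lie subalgebra
`g'` and `X ∈ g`, with `W₀ := ℝ·X` and `W_{k+1} := span{[Y,w] : Y ∈ g', w ∈ W_k}`, the linear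
span of `{e^{ad Y}(X) : Y ∈ g'}` equals `∑_k W_k = ⨆ k, W k`. -/
theorem span_expAd_eq_iSup
    {L : Type*} [LieRing L] [LieAlgebra ℝ L] [Module.Finite ℝ L]
    [LieRing.IsNilpotent L]
    (g' : LieSubalgebra ℝ L) (X : L)
    (W : ℕ → Submodule ℝ L)
    (hW0 : W 0 = Submodule.span ℝ {X})
    (hWsucc : ∀ k, W (k + 1) =
      Submodule.span ℝ {z : L | ∃ Y ∈ g', ∃ w ∈ W k, z = ⁅Y, w⁆}) :
    Submodule.span ℝ {z : L | ∃ Y ∈ g', z = expAd Y X} = ⨆ k, W k := by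
  have hWMon : ∀ n, W n = Submodule.span ℝ (Mon g' X n) := by
    intro n
    induction n with
    | zero =>
      rw [hW0]
      congr 1
      ext z
      constructor
      · rintro rfl
        exact ⟨[], rfl, by simp, rfl⟩
      · rintro ⟨l, hl, _, rfl⟩
        rw [List.length_eq_zero_iff] at hl
        subst hl
        simp [F]
    | succ n IH =>
      rw [hWsucc n, IH]
      apply le_antisymm
      · refine Submodule.span_le.mpr ?_
        rintro _ ⟨Y, hY, w, hw, rfl⟩
        have hmap : (Submodule.span ℝ (Mon g' X n)).map (LieAlgebra.ad ℝ L Y)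
            ≤ Submodule.span ℝ (Mon g' X (n + 1)) := by
          rw [Submodule.map_span]
          refine Submodule.span_mono ?_
          rintro _ ⟨z, ⟨l, hl, hlg, rfl⟩, rfl⟩
          refine ⟨Y :: l, by simp [hl], ?_, by simp [F_cons]⟩
          intro y hy
          rcases List.mem_cons.mp hy with rfl | hy
          · exact hY
          · exact hlg y hy
        exact hmap ⟨w, hw, by simp⟩
      · refine Submodule.span_le.mpr ?_
        rintro z ⟨l, hl, hlg, rfl⟩
        rcases l with _ | ⟨y, t⟩
        · simp at hl
        · have ht : t.length = n := by simpa using hl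
          refine Submodule.subset_span
            ⟨y, hlg y (List.mem_cons_self (a := y) (l := t)), F t X,
              Submodule.subset_span ⟨t, ht, fun z hz => hlg z (List.mem_cons_of_mem _ hz), rfl⟩,
              by simp [F_cons]⟩
  apply le_antisymm
  · refine Submodule.span_le.mpr ?_
    rintro _ ⟨Y, hY, rfl⟩
    have hWk : ∀ k, ((LieAlgebra.ad ℝ L Y) ^ k) X ∈ W k := by
      intro k
      induction k with
      | zero => simpa [hW0] using Submodule.mem_span_singleton_self X
      | succ k IHk =>
        rw [hWsucc k]
        refine Submodule.subset_span ⟨Y, hY, _, IHk, ?_⟩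
        rw [pow_succ']
        simp [Module.End.mul_apply]
    have hexp : expAd Y X = ∑ k ∈ Finset.range (Module.finrank ℝ L + 1),
        (k.factorial : ℝ)⁻¹ • ((LieAlgebra.ad ℝ L Y) ^ k) X := by
      rw [expAd, LinearMap.coe_sum, Finset.sum_apply]
      exact Finset.sum_congr rfl fun k _ => rfl
    rw [hexp]
    refine Submodule.sum_mem _ fun k _ => Submodule.smul_mem _ _ ?_
    exact le_iSup W k (hWk k)
  · refine iSup_le fun k => ?_
    rw [hWMon k]
    exact mon_span_le g' X k
end

section
/- Let μ be a nonnegative Radon measure on ℝⁿ, let A ⊆ ℝⁿ, and let a ∈ A be a point with μ(B_r(a)) > 0 for all r > 0 which is a density point of A relative to the outer measure induced by μ, i.e. lim_{r↓0} μ(A ∩ B_r(a)) / μ(B_r(a)) = 1 (with μ evaluated on A ∩ B_r(a) as an outer measure). Suppose r_i ↓ 0 and λ_i ≥ 0 are such that the measures λ_i · (T_{a,r_i})_♯ μ converge weakly* to a Radon measure ν. Then for every y in the support of ν, dist(a + r_i y, A) / r_i → 0 as i → ∞. -/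
open MeasureTheory Filter Metric
open scoped Topology NNReal ENNReal

private lemma my_bump {n : ℕ} (x : EuclideanSpace ℝ (Fin n)) (R1 R2 : ℝ) (h : R1 < R2) :
    ∃ φ : EuclideanSpace ℝ (Fin n) → ℝ, Continuous φ ∧ HasCompactSupport φ ∧
      (∀ z, 0 ≤ φ z) ∧ (∀ z, φ z ≤ 1) ∧
      (∀ z ∈ closedBall x R1, φ z = 1) ∧ (∀ z, z ∉ ball x R2 → φ z = 0) := by
  refine ⟨fun z => max 0 (min 1 ((R2 - dist z x) / (R2 - R1))), ?_, ?_, ?_, ?_, ?_, ?_⟩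
  · exact continuous_const.max (continuous_const.min
      ((continuous_const.sub ((continuous_id.dist continuous_const))).div_const _))
  · apply HasCompactSupport.intro (isCompact_closedBall x R2)
    intro z hz
    have hd : R2 ≤ dist z x := by
      simpa [mem_closedBall] using (not_lt.1 (fun h' => hz (mem_closedBall.2 h'.le)))
    have h2 : (R2 - dist z x) / (R2 - R1) ≤ 0 :=
      div_nonpos_of_nonpos_of_nonneg (by linarith) (by linarith)
    exact max_eq_left (le_trans (min_le_right _ _) h2)
  · intro z; exact le_max_left _ _
  · intro z; exact max_le (by norm_num) (min_le_left _ _)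
  · intro z hz
    have hd : dist z x ≤ R1 := mem_closedBall.1 hz
    have h1 : (1:ℝ) ≤ (R2 - dist z x) / (R2 - R1) := by
      rw [le_div_iff₀ (by linarith)]; linarith
    show max 0 (min 1 ((R2 - dist z x) / (R2 - R1))) = 1
    rw [min_eq_left h1, max_eq_right (by norm_num : (0:ℝ) ≤ 1)]
  · intro z hz
    have hd : R2 ≤ dist z x := not_lt.1 (fun h' => hz (mem_ball.2 h'))
    have h2 : (R2 - dist z x) / (R2 - R1) ≤ 0 :=
      div_nonpos_of_nonpos_of_nonneg (by linarith) (by linarith)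
    exact max_eq_left (le_trans (min_le_right _ _) h2)

private lemma my_preim {n : ℕ} (a y : EuclideanSpace ℝ (Fin n)) (ri s : ℝ) (h : 0 < ri) :
    (fun z : EuclideanSpace ℝ (Fin n) => ri⁻¹ • (z - a)) ⁻¹' ball y s
      = ball (a + ri • y) (ri * s) := by
  ext z
  simp only [Set.mem_preimage, mem_ball, dist_eq_norm]
  have hx : ri⁻¹ • (z - a) - y = ri⁻¹ • (z - (a + ri • y)) := by
    rw [smul_sub, sub_sub, smul_sub, smul_add, smul_smul, inv_mul_cancel₀ h.ne', one_smul]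
  rw [hx, norm_smul, norm_inv, Real.norm_eq_abs, abs_of_pos h, inv_mul_lt_iff₀ h]

/-- Let `μ` be a nonnegative Radon measure on `ℝⁿ`, `A ⊆ ℝⁿ`, and `a ∈ A` a
point with `μ(B_r(a)) > 0` for all `r > 0` which is a density point of `A` for the outer
measure of `μ`. If `λ_i (T_{a,r_i})_♯ μ → ν` weakly* for some `r_i ↓ 0`, `λ_i ≥ 0`, then every
point `y` of the support of `ν` satisfies `dist(a + r_i y, A)/r_i → 0`. -/
theorem blowup_support_close_to_set
    {n : ℕ} (μ : Measure (EuclideanSpace ℝ (Fin n))) [IsLocallyFiniteMeasure μ]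
    (A : Set (EuclideanSpace ℝ (Fin n))) (a : EuclideanSpace ℝ (Fin n)) (ha : a ∈ A)
    (hpos : ∀ r : ℝ, 0 < r → 0 < μ (ball a r))
    (hdens : Tendsto (fun r : ℝ => μ (A ∩ ball a r) / μ (ball a r)) (𝓝[>] 0) (𝓝 1))
    (r : ℕ → ℝ) (hrpos : ∀ i, 0 < r i) (hr0 : Tendsto r atTop (𝓝 0))
    (lam : ℕ → ℝ≥0)
    (ν : Measure (EuclideanSpace ℝ (Fin n))) [IsLocallyFiniteMeasure ν]
    (hconv : ∀ φ : EuclideanSpace ℝ (Fin n) → ℝ, Continuous φ → HasCompactSupport φ →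
      Tendsto (fun i =>
          ∫ z, φ z ∂((lam i : ℝ≥0∞) • Measure.map (fun z => (r i)⁻¹ • (z - a)) μ))
        atTop (𝓝 (∫ z, φ z ∂ν))) :
    ∀ y : EuclideanSpace ℝ (Fin n), (∀ ε : ℝ, 0 < ε → 0 < ν (ball y ε)) →
      Tendsto (fun i => infDist (a + r i • y) A / r i) atTop (𝓝 0) := by
  intro y hy
  by_contra hcon
  rw [Metric.tendsto_atTop] at hcon
  push_neg at hcon
  obtain ⟨ε, hε, hfreq⟩ := hcon
  -- frequently the blowup point is ε-far from A (in rescaled distance)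
  have hfreq' : ∃ᶠ i in atTop, ε ≤ infDist (a + r i • y) A / r i := by
    rw [frequently_atTop]
    intro N
    obtain ⟨m, hm, h⟩ := hfreq N
    refine ⟨m, hm, ?_⟩
    rw [Real.dist_0_eq_abs, abs_of_nonneg (div_nonneg infDist_nonneg (hrpos m).le)] at h
    exact h
  set μ' : ℕ → Measure (EuclideanSpace ℝ (Fin n)) :=
    fun i => (lam i : ℝ≥0∞) • Measure.map (fun z => (r i)⁻¹ • (z - a)) μ with hμ'
  have hmeas : ∀ i, Measurable (fun z : EuclideanSpace ℝ (Fin n) => (r i)⁻¹ • (z - a)) :=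
    fun i => (by fun_prop : Continuous fun z : EuclideanSpace ℝ (Fin n) => (r i)⁻¹ • (z - a)).measurable
  have hpreim : ∀ i (K : Set (EuclideanSpace ℝ (Fin n))),
      (fun z : EuclideanSpace ℝ (Fin n) => (r i)⁻¹ • (z - a)) ⁻¹' K
        = (fun w : EuclideanSpace ℝ (Fin n) => a + r i • w) '' K := by
    intro i K
    ext z
    simp only [Set.mem_preimage, Set.mem_image]
    constructor
    · intro h
      refine ⟨(r i)⁻¹ • (z - a), h, ?_⟩
      rw [smul_smul, mul_inv_cancel₀ (hrpos i).ne', one_smul]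
      abel
    · rintro ⟨w, hw, rfl⟩
      simpa [smul_smul, inv_mul_cancel₀ (hrpos i).ne'] using hw
  have hfin : ∀ i, IsFiniteMeasureOnCompacts (μ' i) := by
    intro i
    constructor
    intro K hK
    rw [hμ', Measure.smul_apply, Measure.map_apply (hmeas i) hK.measurableSet, smul_eq_mul,
      hpreim i K]
    exact ENNReal.mul_lt_top ENNReal.coe_lt_top
      ((hK.image (by fun_prop : Continuous fun w : EuclideanSpace ℝ (Fin n) => a + r i • w)).measure_lt_top)
  have hball : ∀ (i : ℕ) (y' : EuclideanSpace ℝ (Fin n)) (s : ℝ),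
      μ' i (ball y' s) = (lam i : ℝ≥0∞) * μ (ball (a + r i • y') (r i * s)) := by
    intro i y' s
    rw [hμ', Measure.smul_apply, Measure.map_apply (hmeas i) measurableSet_ball,
      my_preim a y' (r i) s (hrpos i), smul_eq_mul]
  -- bump functions
  obtain ⟨φ, φc, φcs, φ0, φ1, φeq1, φeq0⟩ := my_bump y (ε/8) (ε/4) (by linarith)
  set ρ : ℝ := ‖y‖ + ε with hρdef
  have hρ : 0 < ρ := by positivity
  obtain ⟨ψ, ψc, ψcs, ψ0, ψ1, ψeq1, ψeq0⟩ := my_bump (0 : EuclideanSpace ℝ (Fin n)) ρ (ρ + 1)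
    (by linarith)
  haveI : IsFiniteMeasureOnCompacts ν := isFiniteMeasureOnCompacts_of_isLocallyFiniteMeasure
  haveI : IsFiniteMeasureOnCompacts μ := isFiniteMeasureOnCompacts_of_isLocallyFiniteMeasure
  have hνb : ν (ball y (ε/8)) ≠ ⊤ := (measure_ball_lt_top : ν (ball y (ε/8)) < ⊤).ne
  set c : ℝ := (ν (ball y (ε/8))).toReal with hcdef
  have hc : 0 < c := ENNReal.toReal_pos (hy _ (by positivity)).ne' hνb
  have hφν : Integrable φ ν := φc.integrable_of_hasCompactSupport φcs
  have hcI : c ≤ ∫ z, φ z ∂ν := by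
    have h := hφν.measure_le_integral (Eventually.of_forall φ0)
      (s := ball y (ε/8)) (fun x hx => (φeq1 x (ball_subset_closedBall hx)).ge)
    exact (ENNReal.le_ofReal_iff_toReal_le hνb (integral_nonneg φ0)).1 h
  set M : ℝ := ∫ z, ψ z ∂ν with hMdef
  have hM0 : 0 ≤ M := integral_nonneg ψ0
  set δ : ℝ := min (1/2 : ℝ) ((c/2)/(M+2)) with hδdef
  have hδ0 : 0 < δ := lt_min (by norm_num) (by positivity)
  have hδh : δ ≤ 1/2 := min_le_left _ _
  have hδ2 : δ * (M + 2) ≤ c/2 := by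
    rw [← le_div_iff₀ (by linarith)]
    exact min_le_right _ _
  -- eventual facts
  have E1 : ∀ᶠ i in atTop, c/2 < ∫ z, φ z ∂(μ' i) :=
    (hconv φ φc φcs).eventually (eventually_gt_nhds (by linarith))
  have E2 : ∀ᶠ i in atTop, (∫ z, ψ z ∂(μ' i)) < M + 1 :=
    (hconv ψ ψc ψcs).eventually (eventually_lt_nhds (by linarith))
  have hRtend : Tendsto (fun i => r i * ρ) atTop (𝓝[>] (0:ℝ)) := by
    rw [tendsto_nhdsWithin_iff]
    constructor
    · simpa using hr0.mul_const ρ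
    · exact Eventually.of_forall (fun i => mul_pos (hrpos i) hρ)
  have E3 : ∀ᶠ i in atTop,
      ENNReal.ofReal (1 - δ) < μ (A ∩ ball a (r i * ρ)) / μ (ball a (r i * ρ)) :=
    (hdens.comp hRtend).eventually (eventually_gt_nhds (ENNReal.ofReal_lt_one.2 (by linarith)))
  obtain ⟨i, hbad, ⟨h1, h2⟩, h3⟩ := (hfreq'.and_eventually ((E1.and E2).and E3)).exists
  haveI := hfin i
  set B : Set (EuclideanSpace ℝ (Fin n)) := ball a (r i * ρ) with hBdef
  set S : Set (EuclideanSpace ℝ (Fin n)) := ball (a + r i • y) (r i * (ε/2)) with hSdef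
  have hμBlt : μ B < ⊤ := measure_ball_lt_top
  have hμBpos : 0 < μ B := hpos _ (mul_pos (hrpos i) hρ)
  -- the small ball is disjoint from A
  have hinf : ε * r i ≤ infDist (a + r i • y) A := by
    rw [le_div_iff₀ (hrpos i)] at hbad
    linarith
  have hSA : ∀ z ∈ S, z ∉ A := by
    intro z hz hzA
    have h1' := infDist_le_dist_of_mem hzA (x := a + r i • y)
    rw [hSdef, mem_ball, dist_comm] at hz
    nlinarith [hrpos i]
  have hdisj : Disjoint S (A ∩ B) := Set.disjoint_left.2 (fun z hz hz2 => hSA z hz hz2.1)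
  have hSB : S ⊆ B := by
    intro z hz
    rw [hSdef, mem_ball, dist_eq_norm] at hz
    rw [hBdef, mem_ball, dist_eq_norm]
    have hzy : z - a = (z - (a + r i • y)) + r i • y := by abel
    calc ‖z - a‖ ≤ ‖z - (a + r i • y)‖ + ‖r i • y‖ := by rw [hzy]; exact norm_add_le _ _
      _ < r i * (ε/2) + r i * ‖y‖ := by
          rw [norm_smul, Real.norm_eq_abs, abs_of_pos (hrpos i)]; linarith
      _ ≤ r i * ρ := by rw [hρdef]; nlinarith [hrpos i, norm_nonneg y]
  have hA1 : μ S + μ (A ∩ B) ≤ μ B := by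
    rw [← measure_union' hdisj measurableSet_ball]
    exact measure_mono (Set.union_subset hSB Set.inter_subset_right)
  have hABB : μ (A ∩ B) ≤ μ B := measure_mono Set.inter_subset_right
  have hSle : μ S ≤ μ B := measure_mono hSB
  -- density
  have hT : ENNReal.ofReal (1 - δ) * μ B < μ (A ∩ B) :=
    (ENNReal.lt_div_iff_mul_lt (Or.inl hμBpos.ne') (Or.inl hμBlt.ne)).1 h3
  -- real versions
  set b0 : ℝ := (μ B).toReal with hb0def
  set t0 : ℝ := (μ (A ∩ B)).toReal with ht0def
  set s0 : ℝ := (μ S).toReal with hs0def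
  have hb0 : 0 < b0 := ENNReal.toReal_pos hμBpos.ne' hμBlt.ne
  have ht0 : (1 - δ) * b0 ≤ t0 := by
    have h := ENNReal.toReal_mono (lt_of_le_of_lt hABB hμBlt).ne hT.le
    rwa [ENNReal.toReal_mul, ENNReal.toReal_ofReal (by linarith : (0:ℝ) ≤ 1 - δ)] at h
  have hs0t0 : s0 + t0 ≤ b0 := by
    have h := ENNReal.toReal_mono hμBlt.ne hA1
    rwa [ENNReal.toReal_add (lt_of_le_of_lt hSle hμBlt).ne (lt_of_le_of_lt hABB hμBlt).ne] at h
  -- lower bound: c/2 ≤ λ * s0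
  set lr : ℝ := ((lam i : ℝ≥0∞)).toReal with hlamdef
  have hlam0 : 0 ≤ lr := ENNReal.toReal_nonneg
  have hLS : ENNReal.ofReal (c/2) ≤ (lam i : ℝ≥0∞) * μ S := by
    have hle : ENNReal.ofReal (∫ z, φ z ∂(μ' i)) ≤ μ' i (ball y (ε/4)) :=
      integral_le_measure (fun x _ => φ1 x) (fun x hx => (φeq0 x hx).le)
    calc ENNReal.ofReal (c/2) ≤ ENNReal.ofReal (∫ z, φ z ∂(μ' i)) :=
          ENNReal.ofReal_le_ofReal h1.le
      _ ≤ μ' i (ball y (ε/4)) := hle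
      _ = (lam i : ℝ≥0∞) * μ (ball (a + r i • y) (r i * (ε/4))) := hball i y (ε/4)
      _ ≤ (lam i : ℝ≥0∞) * μ S := by
          refine mul_le_mul_right (measure_mono (ball_subset_ball ?_)) _
          nlinarith [hrpos i]
  have hLSne : (lam i : ℝ≥0∞) * μ S ≠ ⊤ :=
    (ENNReal.mul_lt_top ENNReal.coe_lt_top (lt_of_le_of_lt hSle hμBlt)).ne
  have hcs0 : c/2 ≤ lr * s0 := by
    have h := (ENNReal.ofReal_le_iff_le_toReal hLSne).1 hLS
    rwa [ENNReal.toReal_mul] at h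
  -- upper bound: λ * b0 ≤ M + 1
  have hψint : Integrable ψ (μ' i) := ψc.integrable_of_hasCompactSupport ψcs
  have hup : (lam i : ℝ≥0∞) * μ B ≤ ENNReal.ofReal (M + 1) := by
    have h0 : μ' i (ball 0 ρ) ≤ ENNReal.ofReal (∫ z, ψ z ∂(μ' i)) :=
      hψint.measure_le_integral (Eventually.of_forall ψ0)
        (fun x hx => (ψeq1 x (ball_subset_closedBall hx)).ge)
    have heq : μ' i (ball (0 : EuclideanSpace ℝ (Fin n)) ρ) = (lam i : ℝ≥0∞) * μ B := by
      rw [hball i 0 ρ]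
      simp [hBdef]
    rw [heq] at h0
    exact h0.trans (ENNReal.ofReal_le_ofReal h2.le)
  have hlamb0 : lr * b0 ≤ M + 1 := by
    have h := ENNReal.toReal_mono ENNReal.ofReal_ne_top hup
    rwa [ENNReal.toReal_mul, ENNReal.toReal_ofReal (by linarith)] at h
  -- contradiction
  have hb0exp : (1 - δ) * b0 = b0 - δ * b0 := by ring
  have hs0δ : s0 ≤ δ * b0 := by linarith
  have h8 : lr * s0 ≤ lr * (δ * b0) := mul_le_mul_of_nonneg_left hs0δ hlam0
  have h8' : lr * (δ * b0) = δ * (lr * b0) := by ring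
  have h9 : δ * (lr * b0) ≤ δ * (M + 1) := mul_le_mul_of_nonneg_left hlamb0 hδ0.le
  have hexp : δ * (M + 1) = δ * (M + 2) - δ := by ring
  linarith
end

section
/- Let (X, d) be a complete separable metric space and let μ be a Radon measure on X which is asymptotically doubling: limsup_{r↓0} μ(B_{2r}(x)) / μ(B_r(x)) < +∞ for μ-a.e. x. Then for every set A ⊆ X (not necessarily measurable), μ-almost every point x of A is a density point of A relative to the outer measure μ*: lim_{r↓0} μ*(A ∩ B_r(x)) / μ(B_r(x)) = 1. Here 'μ-almost every point of A' means that the set of points of A where the conclusion fails has μ-outer measure zero. -/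
open MeasureTheory Filter Metric
open scoped Topology ENNReal NNReal

open Set in
/-- Core estimate: a piece of the "low density" set (with uniform doubling constant `n` below
scale `δ`, lower density below `c`, finite outer measure) is `μ`-null. -/
lemma aux_piece_null {X : Type*} [MetricSpace X] [MeasurableSpace X] [BorelSpace X]
    [SecondCountableTopology X]
    (μ : Measure X) [IsLocallyFiniteMeasure μ]
    (A' : Set X) (c c' : ℝ≥0∞) (hcc' : c < c') (hc'1 : c' < 1) (n : ℕ) (δ : ℝ) (hδ : 0 < δ)
    (B : Set X) (hBA : B ⊆ A') (hBfin : μ B ≠ ∞)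
    (hK : ∀ x ∈ B, ∀ r : ℝ, 0 < r → μ (ball x r) ≠ 0)
    (hT : ∀ x ∈ B, ∀ r : ℝ, 0 < r → r < δ →
      μ (closedBall x (3 * r)) ≤ (n : ℝ≥0∞) * μ (closedBall x r))
    (hE : ∀ x ∈ B, liminf (fun r : ℝ => μ (A' ∩ ball x r) / μ (ball x r)) (𝓝[>] 0) < c) :
    μ B = 0 := by
  have hc'0 : c' ≠ 0 := (lt_of_le_of_lt zero_le hcc').ne'
  have hc't : c' ≠ ∞ := (hc'1.trans ENNReal.one_lt_top).ne
  have key : ∀ η : ℝ≥0∞, 0 < η → μ B ≤ c' * (μ B + η) := by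
    intro η hη
    have hlt : μ B < μ B + η := ENNReal.lt_add_right hBfin hη.ne'
    obtain ⟨U, hBU, hUopen, hUμ⟩ := Set.exists_isOpen_lt_of_lt B _ hlt
    set t : Set (ℝ × X) := {p | p.2 ∈ B ∧ 0 < p.1 ∧ p.1 < δ ∧ closedBall p.2 p.1 ⊆ U ∧
      μ (A' ∩ closedBall p.2 p.1) ≤ c' * μ (closedBall p.2 p.1)} with ht_def
    have hf : ∀ x ∈ B, ∀ ε > (0 : ℝ), ∃ p ∈ t, p.1 ≤ ε ∧ p.2 = x := by
      intro x hx ε hε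
      obtain ⟨ρ, hρ0, hρU⟩ := Metric.isOpen_iff.1 hUopen x (hBU hx)
      obtain ⟨s₀, hs₀mem, hs₀fin⟩ := μ.finiteAt_nhds x
      obtain ⟨ε₀, hε₀0, hε₀sub⟩ := Metric.mem_nhds_iff.1 hs₀mem
      set R : ℝ := min (min ε δ) (min ρ ε₀) with hRdef
      have hR0 : 0 < R := by
        simp only [hRdef, lt_min_iff]
        exact ⟨⟨hε, hδ⟩, hρ0, hε₀0⟩
      have hIoo : Ioo (0 : ℝ) R ∈ 𝓝[>] (0 : ℝ) := Ioo_mem_nhdsGT_of_mem ⟨le_rfl, hR0⟩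
      have freq := frequently_lt_of_liminf_lt (h := hE x hx)
      obtain ⟨r, hratio, hrmem⟩ :=
        (freq.and_eventually (eventually_of_mem hIoo fun r hr => hr)).exists
      obtain ⟨hr0, hrR⟩ := hrmem
      have hRε : R ≤ ε := (min_le_left _ _).trans (min_le_left _ _)
      have hRδ : R ≤ δ := (min_le_left _ _).trans (min_le_right _ _)
      have hRρ : R ≤ ρ := (min_le_right _ _).trans (min_le_left _ _)
      have hRε₀ : R ≤ ε₀ := (min_le_right _ _).trans (min_le_right _ _)
      have hb0 : μ (ball x r) ≠ 0 := hK x hx r hr0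
      have hbfin : μ (ball x r) ≠ ∞ := by
        refine ne_of_lt (lt_of_le_of_lt (measure_mono ?_) hs₀fin)
        exact (ball_subset_ball (le_of_lt (hrR.trans_le hRε₀))).trans hε₀sub
      have hnum : μ (A' ∩ ball x r) < c * μ (ball x r) :=
        (ENNReal.div_lt_iff (Or.inl hb0) (Or.inl hbfin)).1 hratio
      -- approximate the open ball from inside by closed balls
      have hmono : Monotone (fun i : ℕ => closedBall x (r - r / (i + 2))) := by
        intro i j hij
        apply closedBall_subset_closedBall
        have h1 : r / ((j : ℝ) + 2) ≤ r / ((i : ℝ) + 2) := by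
          apply div_le_div_of_nonneg_left hr0.le (by positivity)
          exact_mod_cast by omega
        linarith
      have hunion : (⋃ i : ℕ, closedBall x (r - r / (i + 2))) = ball x r := by
        apply Set.Subset.antisymm
        · refine Set.iUnion_subset fun i => closedBall_subset_ball ?_
          have : 0 < r / ((i : ℝ) + 2) := by positivity
          linarith
        · intro y hy
          have hy' : dist y x < r := mem_ball.1 hy
          have hpos : 0 < r - dist y x := by linarith
          obtain ⟨i, hi⟩ := exists_nat_gt (r / (r - dist y x))
          refine Set.mem_iUnion.2 ⟨i, mem_closedBall.2 ?_⟩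
          rw [div_lt_iff₀ hpos] at hi
          have h2 : r / ((i : ℝ) + 2) ≤ r - dist y x := by
            rw [div_le_iff₀ (by positivity)]
            nlinarith [dist_nonneg (x := y) (y := x)]
          linarith
      have hseq : Tendsto (fun i : ℕ => μ (closedBall x (r - r / (i + 2)))) atTop
          (𝓝 (μ (ball x r))) := by
        have := tendsto_measure_iUnion_atTop (μ := μ) hmono
        rwa [hunion] at this
      have hdiv1 : c / c' < 1 := by
        rw [ENNReal.div_lt_iff (Or.inl hc'0) (Or.inl hc't), one_mul]
        exact hcc'
      have hthr : c / c' * μ (ball x r) < μ (ball x r) := by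
        calc c / c' * μ (ball x r) < 1 * μ (ball x r) :=
              ENNReal.mul_lt_mul_left hb0 hbfin hdiv1
          _ = μ (ball x r) := one_mul _
      obtain ⟨i, hi⟩ := (hseq.eventually (eventually_gt_nhds hthr)).exists
      set r' : ℝ := r - r / (i + 2) with hr'def
      have hfrac : 0 < r / ((i : ℝ) + 2) := by positivity
      have hfrac2 : r / ((i : ℝ) + 2) < r := by
        rw [div_lt_iff₀ (by positivity)]
        nlinarith
      have hr'0 : 0 < r' := by simp only [hr'def]; linarith
      have hr'r : r' < r := by simp only [hr'def]; linarith
      refine ⟨(r', x), ⟨hx, hr'0, ?_, ?_, ?_⟩, ?_, rfl⟩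
      · exact hr'r.trans (hrR.trans_le hRδ)
      · refine (closedBall_subset_ball hr'r).trans ((ball_subset_ball ?_).trans hρU)
        exact le_of_lt (hrR.trans_le hRρ)
      · calc μ (A' ∩ closedBall x r')
            ≤ μ (A' ∩ ball x r) :=
              measure_mono (Set.inter_subset_inter_right _ (closedBall_subset_ball hr'r))
          _ ≤ c * μ (ball x r) := hnum.le
          _ = c' * (c / c') * μ (ball x r) := by rw [ENNReal.mul_div_cancel hc'0 hc't]
          _ = c' * (c / c' * μ (ball x r)) := mul_assoc _ _ _
          _ ≤ c' * μ (closedBall x r') := by gcongr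

      · exact (hr'r.trans (hrR.trans_le hRε)).le
    obtain ⟨u, hut, hu_count, hu_disj, hu_cov⟩ :=
      Vitali.exists_disjoint_covering_ae μ B t (n : ℝ≥0) Prod.fst Prod.snd
        (fun p => closedBall p.2 p.1)
        (fun p _ => Set.Subset.rfl)
        (fun p hp => by simpa using hT p.2 hp.1 p.1 hp.2.1 hp.2.2.1)
        (fun p hp => ⟨p.2, ball_subset_interior_closedBall (mem_ball_self hp.2.1)⟩)
        (fun p _ => isClosed_closedBall)
        hf
    have hsplit : μ B ≤ μ (B ∩ ⋃ p ∈ u, closedBall p.2 p.1)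
        + μ (B \ ⋃ p ∈ u, closedBall p.2 p.1) := by
      conv_lhs => rw [← Set.inter_union_diff B (⋃ p ∈ u, closedBall p.2 p.1)]
      exact measure_union_le _ _
    rw [hu_cov, add_zero] at hsplit
    calc μ B ≤ μ (B ∩ ⋃ p ∈ u, closedBall p.2 p.1) := hsplit
      _ ≤ ∑' p : u, μ (B ∩ closedBall p.1.2 p.1.1) := by
          rw [Set.inter_iUnion₂]
          exact measure_biUnion_le μ hu_count _
      _ ≤ ∑' p : u, c' * μ (closedBall p.1.2 p.1.1) := by
          apply ENNReal.tsum_le_tsum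
          rintro ⟨p, hp⟩
          calc μ (B ∩ closedBall p.2 p.1)
              ≤ μ (A' ∩ closedBall p.2 p.1) :=
                measure_mono (Set.inter_subset_inter_left _ hBA)
            _ ≤ c' * μ (closedBall p.2 p.1) := (hut hp).2.2.2.2
      _ = c' * ∑' p : u, μ (closedBall p.1.2 p.1.1) := ENNReal.tsum_mul_left
      _ = c' * μ (⋃ p ∈ u, closedBall p.2 p.1) := by
          rw [measure_biUnion hu_count hu_disj (fun p _ => measurableSet_closedBall)]
      _ ≤ c' * μ U := by
          gcongr
          exact Set.iUnion₂_subset fun p hp => (hut hp).2.2.2.1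
      _ ≤ c' * (μ B + η) := by gcongr
  by_contra h0
  have hle : μ B ≤ c' * μ B := by
    refine ENNReal.le_of_forall_pos_le_add fun ε hε _ => ?_
    calc μ B ≤ c' * (μ B + ε) := key ε (by exact_mod_cast hε)
      _ = c' * μ B + c' * ε := mul_add _ _ _
      _ ≤ c' * μ B + ε := by
          gcongr
          calc c' * (ε : ℝ≥0∞) ≤ 1 * ε := by gcongr
            _ = ε := one_mul _
  have hlt : c' * μ B < 1 * μ B := ENNReal.mul_lt_mul_left h0 hBfin hc'1
  rw [one_mul] at hlt
  exact absurd (hle.trans_lt hlt) (lt_irrefl _)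

/-- If `μ` is an asymptotically doubling Radon measure on a complete
separable metric space, then for every (not necessarily measurable) set `A`, `μ`-almost every
point of `A` is a density point of `A` relative to the outer measure induced by `μ` (the
coercion of `μ` to a set function is this outer measure). -/
theorem ae_density_point_of_asymptotically_doubling
    {X : Type*} [MetricSpace X] [CompleteSpace X] [TopologicalSpace.SeparableSpace X]
    [MeasurableSpace X] [BorelSpace X]
    (μ : Measure X) [IsLocallyFiniteMeasure μ] [μ.InnerRegular]
    (hdoub : ∀ᵐ x ∂μ,
      Filter.limsup (fun r : ℝ => μ (ball x (2 * r)) / μ (ball x r)) (𝓝[>] 0) < ⊤) :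
    ∀ A : Set X,
      μ {x ∈ A | ¬ Tendsto (fun r : ℝ => μ (A ∩ ball x r) / μ (ball x r)) (𝓝[>] 0) (𝓝 1)}
        = 0 := by
  haveI : SecondCountableTopology X := UniformSpace.secondCountable_of_separable X
  intro A
  set A' := toMeasurable μ A with hA'def
  have hAsub : A ⊆ A' := subset_toMeasurable μ A
  have hfun : ∀ x : X, (fun r : ℝ => μ (A ∩ ball x r) / μ (ball x r)) =
      fun r : ℝ => μ (A' ∩ ball x r) / μ (ball x r) := fun x => by
    funext r
    rw [← Measure.measure_toMeasurable_inter_of_sFinite measurableSet_ball A]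
  -- the set of points where some ball is null
  set K : Set X := {x | ∀ r : ℝ, 0 < r → μ (ball x r) ≠ 0} with hKdef
  have hKc : μ Kᶜ = 0 := by
    apply measure_null_of_locally_null
    intro x hx
    simp only [hKdef, Set.mem_compl_iff, Set.mem_setOf_eq, not_forall] at hx
    obtain ⟨r, hr0, hr⟩ := hx
    rw [not_ne_iff] at hr
    exact ⟨ball x r, mem_nhdsWithin_of_mem_nhds (ball_mem_nhds x hr0), hr⟩
  -- the good (asymptotically doubling for closed balls) set
  set good : X → ℕ → ℝ → Prop := fun x n δ =>
    ∀ r : ℝ, 0 < r → r < δ → μ (closedBall x (3 * r)) ≤ (n : ℝ≥0∞) * μ (closedBall x r)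
    with hgood_def
  set G : Set X := {x | ∃ n : ℕ, ∃ δ : ℝ, 0 < δ ∧ good x n δ} with hGdef
  have hGae : ∀ᵐ x ∂μ, x ∈ G := by
    filter_upwards [hdoub] with x hx
    obtain ⟨n, hn⟩ := ENNReal.exists_nat_gt hx.ne
    have hn0 : (n : ℝ≥0∞) ≠ 0 := (lt_of_le_of_lt zero_le hn).ne'
    have hev : ∀ᶠ r in 𝓝[>] (0 : ℝ), μ (ball x (2 * r)) ≤ n * μ (ball x r) := by
      filter_upwards [eventually_lt_of_limsup_lt hn] with r hr
      rcases eq_or_ne (μ (ball x r)) 0 with h0 | h0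
      · rcases eq_or_ne (μ (ball x (2 * r))) 0 with h2 | h2
        · simp [h2]
        · exfalso
          rw [h0, ENNReal.div_zero h2] at hr
          exact not_top_lt hr
      · rcases eq_or_ne (μ (ball x r)) ∞ with htop | htop
        · rw [htop, ENNReal.mul_top hn0]
          exact le_top
        · exact ((ENNReal.div_lt_iff (Or.inl h0) (Or.inl htop)).1 hr).le
    have h2 : Tendsto (fun r : ℝ => 2 * r) (𝓝[>] 0) (𝓝[>] 0) := by
      apply tendsto_nhdsWithin_of_tendsto_nhds_of_eventually_within
      · have : Tendsto (fun r : ℝ => 2 * r) (𝓝 0) (𝓝 (2 * 0)) :=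
          (continuous_const.mul continuous_id).tendsto 0
        rw [mul_zero] at this
        exact this.mono_left nhdsWithin_le_nhds
      · filter_upwards [self_mem_nhdsWithin] with r hr
        exact mul_pos two_pos (Set.mem_Ioi.1 hr)
    have hev2 := h2.eventually hev
    have hev3 : ∀ᶠ r in 𝓝[>] (0 : ℝ),
        μ (closedBall x (3 * r)) ≤ ((n * n : ℕ) : ℝ≥0∞) * μ (closedBall x r) := by
      filter_upwards [hev, hev2, self_mem_nhdsWithin] with r h1 h2' hr
      have hr0 : (0 : ℝ) < r := hr
      calc μ (closedBall x (3 * r)) ≤ μ (ball x (2 * (2 * r))) :=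
            measure_mono (closedBall_subset_ball (by linarith))
        _ ≤ n * μ (ball x (2 * r)) := h2'
        _ ≤ n * (n * μ (ball x r)) := by gcongr
        _ = ((n * n : ℕ) : ℝ≥0∞) * μ (ball x r) := by push_cast; ring
        _ ≤ ((n * n : ℕ) : ℝ≥0∞) * μ (closedBall x r) := by
            gcongr
            exact ball_subset_closedBall
    obtain ⟨δ, hδ0, hδ⟩ := (nhdsGT_basis (0 : ℝ)).eventually_iff.1 hev3
    exact ⟨n * n, δ, hδ0, fun r hr0 hrδ => hδ ⟨hr0, hrδ⟩⟩
  have hGc : μ Gᶜ = 0 := by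
    rw [ae_iff] at hGae
    simpa [Set.compl_def] using hGae
  -- the low density set and its pieces
  set L : X → ℝ≥0∞ := fun x =>
    liminf (fun r : ℝ => μ (A' ∩ ball x r) / μ (ball x r)) (𝓝[>] 0) with hLdef
  set E : Set X := {x | x ∈ A' ∧ L x < 1} with hEdef
  set P : ℚ → ℕ → ℕ → ℕ → Set X := fun q n k j =>
    {x | x ∈ A' ∧ x ∈ K ∧ good x n (1 / (k + 1)) ∧ L x < ENNReal.ofReal q}
      ∩ spanningSets μ j with hPdef
  have hP : ∀ q : ℚ, 0 < (q : ℝ) → (q : ℝ) < 1 → ∀ n k j : ℕ, μ (P q n k j) = 0 := by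
    intro q hq0 hq1 n k j
    refine aux_piece_null μ A' (ENNReal.ofReal q) (ENNReal.ofReal ((q + 1) / 2))
      ?_ ?_ n (1 / (k + 1)) (by positivity) (P q n k j)
      (fun x hx => hx.1.1) ?_ (fun x hx => hx.1.2.1) (fun x hx => hx.1.2.2.1)
      (fun x hx => hx.1.2.2.2)
    · rw [ENNReal.ofReal_lt_ofReal_iff (by positivity)]
      linarith
    · rw [ENNReal.ofReal_lt_one]
      linarith
    · exact ne_of_lt (lt_of_le_of_lt (measure_mono Set.inter_subset_right)
        (measure_spanningSets_lt_top μ j))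
  have hEsub : E ⊆ Kᶜ ∪ Gᶜ ∪
      ⋃ (q : ℚ) (_ : 0 < (q : ℝ) ∧ (q : ℝ) < 1) (n : ℕ) (k : ℕ) (j : ℕ), P q n k j := by
    intro x hx
    by_cases hxK : x ∈ K
    swap
    · exact Or.inl (Or.inl hxK)
    by_cases hxG : x ∈ G
    swap
    · exact Or.inl (Or.inr hxG)
    right
    obtain ⟨q, hq0, hLq, hq1⟩ := ENNReal.lt_iff_exists_rat_btwn.1 hx.2
    have hq0' : 0 < (q : ℝ) := by
      by_contra hcon
      push_neg at hcon
      rw [Real.toNNReal_of_nonpos hcon] at hLq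
      simp at hLq
    have hq1' : (q : ℝ) < 1 := by
      by_contra hcon
      push_neg at hcon
      have : (1 : ℝ≥0) ≤ Real.toNNReal q := by
        rw [← Real.toNNReal_one]
        exact Real.toNNReal_mono hcon
      have : (1 : ℝ≥0∞) ≤ (Real.toNNReal q : ℝ≥0∞) := by exact_mod_cast this
      exact absurd hq1 (not_lt.2 this)
    obtain ⟨m, δ, hδ0, hgoodx⟩ := hxG
    obtain ⟨k, hk⟩ := exists_nat_one_div_lt hδ0
    have hxj : ∃ j : ℕ, x ∈ spanningSets μ j := by
      have := iUnion_spanningSets μ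
      rw [Set.iUnion_eq_univ_iff] at this
      exact this x
    obtain ⟨j, hj⟩ := hxj
    refine Set.mem_iUnion.2 ⟨q, Set.mem_iUnion.2 ⟨⟨hq0', hq1'⟩, Set.mem_iUnion.2 ⟨m,
      Set.mem_iUnion.2 ⟨k, Set.mem_iUnion.2 ⟨j, ⟨⟨hx.1, hxK, ?_, ?_⟩, hj⟩⟩⟩⟩⟩⟩
    · intro r hr0 hrk
      exact hgoodx r hr0 (hrk.trans hk)
    · rw [ENNReal.ofReal]
      exact hLq
  have hEnull : μ E = 0 := by
    refine measure_mono_null hEsub ?_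
    refine measure_union_null (measure_union_null hKc hGc) ?_
    refine measure_iUnion_null fun q => measure_iUnion_null fun hq =>
      measure_iUnion_null fun n => measure_iUnion_null fun k =>
      measure_iUnion_null fun j => hP q hq.1 hq.2 n k j
  -- conclusion
  refine measure_mono_null ?_ hEnull
  intro x hx
  obtain ⟨hxA, hxT⟩ := hx
  refine ⟨hAsub hxA, ?_⟩
  by_contra hL
  rw [not_lt] at hL
  apply hxT
  rw [hfun x]
  have hub : limsup (fun r : ℝ => μ (A' ∩ ball x r) / μ (ball x r)) (𝓝[>] 0) ≤ 1 := by
    apply limsup_le_of_le (h := ?_)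
    filter_upwards with r
    apply ENNReal.div_le_of_le_mul
    rw [one_mul]
    exact measure_mono Set.inter_subset_right
  exact tendsto_of_le_liminf_of_limsup_le hL hub
end
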